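/- Let N ≥ 1 and let G_N = (α·(1−β)⁻¹)^N ∈ ℂ[[α,β]]. Then Σ_{i,j ≥ 0, i ≥ j} 2^{−(i+j)} [α^i β^j] G_N = 1/2 + 4^{−N} binom(2N−1, N). (Here G_N = γ_𝐭 for the extended binary expansion 𝐭 = (1,∞,1,∞,…,1,∞) ∈ ℕ̄₊^{2N} with all k_j = 1 and all ℓ_j = ∞.) -/

import Mathlib

open MvPowerSeries Finset

noncomputable section

/-- The ring `ℂ[[α,β]]` of formal power series in two commuting variables. -/
abbrev R2 : Type := MvPowerSeries (Fin 2) ℂ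

/-- The variable `α`. -/
def pa : R2 := MvPowerSeries.X 0
/-- The variable `β`. -/
def pb : R2 := MvPowerSeries.X 1

/-- `2^{−(i+j)}` times the (real) coefficient `[α^i β^j] f`. -/
def coefw (i j : ℕ) (f : R2) : ℝ :=
  ((2 : ℝ) ^ (i + j))⁻¹ *
    (MvPowerSeries.coeff (Finsupp.single (0 : Fin 2) i + Finsupp.single (1 : Fin 2) j) f).re

def gg (m : ℕ) : R2 := fun d => if d 0 = 0 then ((m + d 1).choose (d 1) : ℂ) else 0

lemma coeff_gg (m : ℕ) (d : Fin 2 →₀ ℕ) :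
    MvPowerSeries.coeff d (gg m) = if d 0 = 0 then ((m + d 1).choose (d 1) : ℂ) else 0 := rfl

lemma coeff_mul_pb (f : R2) (d : Fin 2 →₀ ℕ) :
    MvPowerSeries.coeff d (f * pb) =
      if 0 < d 1 then MvPowerSeries.coeff (d - Finsupp.single 1 1) f else 0 := by
  rw [pb, MvPowerSeries.X, coeff_mul_monomial]
  simp [Finsupp.single_le_iff, Nat.one_le_iff_ne_zero, Nat.pos_iff_ne_zero]

lemma gg_mul (m : ℕ) : gg (m + 1) * (1 - pb) = gg m := by
  ext d
  rw [mul_sub, mul_one, map_sub, coeff_mul_pb, coeff_gg, coeff_gg]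
  rcases Nat.eq_zero_or_pos (d 1) with h | h
  · rw [coeff_gg]; simp only [h, lt_self_iff_false, if_false, sub_zero, Nat.choose_zero_right]
  · rw [if_pos h, coeff_gg]
    have h0 : ((d - Finsupp.single 1 1 : Fin 2 →₀ ℕ)) 0 = d 0 := by
      rw [Finsupp.tsub_apply, Finsupp.single_apply]; simp
    have h1 : ((d - Finsupp.single 1 1 : Fin 2 →₀ ℕ)) 1 = d 1 - 1 := by
      rw [Finsupp.tsub_apply, Finsupp.single_apply]; simp
    rw [h0, h1]
    by_cases hd : d 0 = 0
    · rw [if_pos hd, if_pos hd, if_pos hd]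
      obtain ⟨j, hj⟩ : ∃ j, d 1 = j + 1 := ⟨d 1 - 1, by omega⟩
      rw [hj]
      simp only [Nat.add_sub_cancel]
      rw [show m + 1 + (j + 1) = (m + 1 + j) + 1 by ring, Nat.choose_succ_succ]
      push_cast
      rw [show m + 1 + j = m + (j + 1) by ring]
      ring
    · simp [hd]

lemma fin2_eq_zero_iff (d : Fin 2 →₀ ℕ) : d = 0 ↔ d 0 = 0 ∧ d 1 = 0 := by
  constructor
  · rintro rfl; simp
  · rintro ⟨h0, h1⟩
    ext i
    fin_cases i
    · exact h0
    · exact h1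

lemma gg_zero_mul : gg 0 * (1 - pb) = 1 := by
  ext d
  rw [mul_sub, mul_one, map_sub, coeff_mul_pb, coeff_gg, MvPowerSeries.coeff_one]
  rcases Nat.eq_zero_or_pos (d 1) with h | h
  · simp only [h, lt_self_iff_false, if_false, sub_zero, Nat.choose_zero_right,
      fin2_eq_zero_iff, Nat.cast_one]
    by_cases hd : d 0 = 0 <;> simp [hd, h]
  · rw [if_pos h, coeff_gg]
    have h0 : ((d - Finsupp.single 1 1 : Fin 2 →₀ ℕ)) 0 = d 0 := by
      rw [Finsupp.tsub_apply, Finsupp.single_apply]; simp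
    have hd0 : ¬ d = 0 := by rw [fin2_eq_zero_iff]; omega
    rw [h0, if_neg hd0]
    by_cases hd : d 0 = 0 <;> simp [hd]

lemma gg_mul_pow (m : ℕ) : gg m * (1 - pb) ^ (m + 1) = 1 := by
  induction m with
  | zero => simpa using gg_zero_mul
  | succ n ih =>
    rw [pow_succ', ← mul_assoc]
    calc gg (n + 1) * (1 - pb) * (1 - pb) ^ (n + 1) = gg n * (1 - pb) ^ (n + 1) := by
          rw [gg_mul]
      _ = 1 := ih

lemma one_sub_pb_ne : MvPowerSeries.constantCoeff (1 - pb) ≠ 0 := by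
  rw [map_sub, map_one, pb, MvPowerSeries.constantCoeff_X]
  simp

lemma inv_pow_eq (m : ℕ) : ((1 - pb)⁻¹) ^ (m + 1) = gg m := by
  have h1 : ((1 - pb)⁻¹) ^ (m + 1) * (1 - pb) ^ (m + 1) = 1 := by
    rw [← mul_pow, MvPowerSeries.inv_mul_cancel _ one_sub_pb_ne, one_pow]
  calc ((1 - pb)⁻¹) ^ (m + 1) = ((1 - pb)⁻¹) ^ (m + 1) * (gg m * (1 - pb) ^ (m + 1)) := by
        rw [gg_mul_pow, mul_one]
    _ = gg m * (((1 - pb)⁻¹) ^ (m + 1) * (1 - pb) ^ (m + 1)) := by ring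
    _ = gg m := by rw [h1, mul_one]

lemma coeff_G (N i j : ℕ) (hN : 1 ≤ N) :
    MvPowerSeries.coeff (Finsupp.single (0 : Fin 2) i + Finsupp.single (1 : Fin 2) j)
      ((pa * (1 - pb)⁻¹) ^ N) =
      if i = N then (((N - 1 + j).choose j : ℕ) : ℂ) else 0 := by
  obtain ⟨n, rfl⟩ : ∃ n, N = n + 1 := ⟨N - 1, by omega⟩
  rw [mul_pow, inv_pow_eq, pa, MvPowerSeries.X_pow_eq, coeff_monomial_mul]
  have happ0 : (Finsupp.single (0 : Fin 2) i + Finsupp.single (1 : Fin 2) j) 0 = i := by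
    simp
  have happ1 : (Finsupp.single (0 : Fin 2) i + Finsupp.single (1 : Fin 2) j) 1 = j := by
    simp
  by_cases hle : Finsupp.single (0 : Fin 2) (n + 1) ≤
      Finsupp.single (0 : Fin 2) i + Finsupp.single (1 : Fin 2) j
  · have hi : n + 1 ≤ i := by
      have := hle 0
      simpa [happ0] using this
    rw [if_pos hle, coeff_gg, one_mul]
    have h0 : ((Finsupp.single (0 : Fin 2) i + Finsupp.single (1 : Fin 2) j -
        Finsupp.single (0 : Fin 2) (n + 1) : Fin 2 →₀ ℕ)) 0 = i - (n + 1) := by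
      rw [Finsupp.tsub_apply, happ0]; simp
    have h1 : ((Finsupp.single (0 : Fin 2) i + Finsupp.single (1 : Fin 2) j -
        Finsupp.single (0 : Fin 2) (n + 1) : Fin 2 →₀ ℕ)) 1 = j := by
      rw [Finsupp.tsub_apply, happ1]; simp
    rw [h0, h1]
    by_cases hi2 : i = n + 1
    · rw [if_pos (by omega), if_pos hi2]
      norm_num
    · rw [if_neg (by omega), if_neg hi2]
  · have hi : ¬ (n + 1 ≤ i) := by
      intro hcon
      exact hle (by
        intro s
        fin_cases s
        · simpa [happ0] using hcon
        · simp)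
    rw [if_neg hle, if_neg (by omega)]

lemma key1 (n m : ℕ) :
    ∑ j ∈ range (m + 1), (n + j).choose j * 2 ^ (m - j) =
      ∑ k ∈ range (m + 1), (n + m + 1).choose k := by
  induction m with
  | zero => simp
  | succ m ih =>
    have hL : ∑ j ∈ range (m + 2), (n + j).choose j * 2 ^ (m + 1 - j) =
        2 * (∑ j ∈ range (m + 1), (n + j).choose j * 2 ^ (m - j)) +
          (n + (m + 1)).choose (m + 1) := by
      rw [Finset.sum_range_succ, Finset.mul_sum]
      have : ∀ j ∈ range (m + 1), (n + j).choose j * 2 ^ (m + 1 - j) =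
          2 * ((n + j).choose j * 2 ^ (m - j)) := by
        intro j hj
        rw [Finset.mem_range] at hj
        rw [show m + 1 - j = (m - j) + 1 by omega, pow_succ]
        ring
      rw [Finset.sum_congr rfl this]
      simp
    have hR : ∑ k ∈ range (m + 2), (n + (m + 1) + 1).choose k =
        2 * (∑ k ∈ range (m + 1), (n + m + 1).choose k) +
          (n + m + 1).choose (m + 1) := by
      rw [Finset.sum_range_succ' (fun k => (n + (m + 1) + 1).choose k)]
      have : ∀ k ∈ range (m + 1), (n + (m + 1) + 1).choose (k + 1) =
          (n + m + 1).choose k + (n + m + 1).choose (k + 1) := by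
        intro k hk
        rw [show n + (m + 1) + 1 = (n + m + 1) + 1 by ring, Nat.choose_succ_succ]
      rw [Finset.sum_congr rfl this, Finset.sum_add_distrib]
      have e1 : ∑ x ∈ range (m + 1), (n + m + 1).choose (x + 1) + (n + m + 1).choose 0 =
          ∑ x ∈ range (m + 2), (n + m + 1).choose x :=
        (Finset.sum_range_succ' (fun k => (n + m + 1).choose k) (m + 1)).symm
      have e2 : ∑ x ∈ range (m + 2), (n + m + 1).choose x =
          ∑ x ∈ range (m + 1), (n + m + 1).choose x + (n + m + 1).choose (m + 1) :=
        Finset.sum_range_succ _ _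
      have hnz : (n + (m + 1) + 1).choose 0 = 1 := Nat.choose_zero_right _
      have hnz2 : (n + m + 1).choose 0 = 1 := Nat.choose_zero_right _
      omega
    rw [hL, hR, ih, show n + (m + 1) = n + m + 1 by ring]

lemma key2 (N : ℕ) :
    2 * ∑ k ∈ range (N + 1), (2 * N).choose k = 4 ^ N + (2 * N).choose N := by
  have hB : ∑ k ∈ range (N + 1), (2 * N).choose (N + k) =
      ∑ k ∈ range (N + 1), (2 * N).choose k := by
    rw [← Finset.sum_range_reflect]
    simp only [Nat.add_sub_cancel]
    refine Finset.sum_congr rfl fun k hk => ?_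
    rw [Finset.mem_range] at hk
    rw [show N + (N - k) = 2 * N - k by omega, Nat.choose_symm (by omega)]
  have hsplit : ∑ k ∈ range (2 * N + 1), (2 * N).choose k =
      ∑ k ∈ range (N + 1), (2 * N).choose k +
        ∑ k ∈ range N, (2 * N).choose (N + 1 + k) := by
    rw [show 2 * N + 1 = (N + 1) + N by omega, Finset.sum_range_add]
  have hpeel : ∑ k ∈ range (N + 1), (2 * N).choose (N + k) =
      (2 * N).choose N + ∑ k ∈ range N, (2 * N).choose (N + 1 + k) := by
    rw [Finset.sum_range_succ' (fun k => (2 * N).choose (N + k))]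
    have : ∀ k, (2 * N).choose (N + (k + 1)) = (2 * N).choose (N + 1 + k) := by
      intro k; rw [show N + (k + 1) = N + 1 + k by ring]
    simp only [this, Nat.add_zero]
    omega
  have htot : ∑ k ∈ range (2 * N + 1), (2 * N).choose k = 4 ^ N := by
    rw [Nat.sum_range_choose, show (4 : ℕ) = 2 ^ 2 by norm_num, ← pow_mul]
  omega

lemma key3 (N : ℕ) (hN : 1 ≤ N) : (2 * N).choose N = 2 * (2 * N - 1).choose N := by
  obtain ⟨n, rfl⟩ : ∃ n, N = n + 1 := ⟨N - 1, by omega⟩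
  have h1 : 2 * (n + 1) = (2 * n + 1) + 1 := by ring
  have h2 : 2 * (n + 1) - 1 = 2 * n + 1 := by omega
  rw [h2, h1, Nat.choose_succ_succ, Nat.choose_symm_half]
  omega

lemma keymain (N : ℕ) (hN : 1 ≤ N) :
    ∑ j ∈ range (N + 1), (N - 1 + j).choose j * 2 ^ (N - j) =
      2 ^ (2 * N - 1) + (2 * N - 1).choose N := by
  have h := key1 (N - 1) N
  rw [show N - 1 + N + 1 = 2 * N by omega] at h
  have h2 := key2 N
  have h3 := key3 N hN
  have h4 : (4 : ℕ) ^ N = 2 * 2 ^ (2 * N - 1) := by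
    obtain ⟨k, hk⟩ : ∃ k, 2 * N = k + 1 := ⟨2 * N - 1, by omega⟩
    rw [show (4 : ℕ) = 2 ^ 2 by norm_num, ← pow_mul, hk, show k + 1 - 1 = k by omega, pow_succ]
    ring
  omega

lemma coefw_G (N i j : ℕ) (hN : 1 ≤ N) :
    coefw i j ((pa * (1 - pb)⁻¹) ^ N) =
      if i = N then ((2 : ℝ) ^ (i + j))⁻¹ * ((N - 1 + j).choose j : ℝ) else 0 := by
  unfold coefw
  rw [coeff_G N i j hN]
  split
  · simp
  · simp

/-- **Proposition.** For `N ≥ 1` and `G_N = (α(1−β)⁻¹)^N` (which equals `γ_𝐭` for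
`𝐭 = (1,∞,…,1,∞) ∈ ℕ̄₊^{2N}`),
`Σ_{i ≥ j ≥ 0} 2^{−(i+j)} [α^i β^j] G_N = 1/2 + 4^{−N} C(2N−1, N)`. -/
theorem c_ones_separated_by_infinite_zeros (N : ℕ) (hN : 1 ≤ N) :
    (∑' p : ℕ × ℕ, if p.2 ≤ p.1 then coefw p.1 p.2 ((pa * (1 - pb)⁻¹) ^ N) else 0) =
      1 / 2 + ((4 : ℝ) ^ N)⁻¹ * ((2 * N - 1).choose N : ℝ) := by
  have hf : ∀ p : ℕ × ℕ, p ∉ ({N} ×ˢ range (N + 1) : Finset (ℕ × ℕ)) →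
      (if p.2 ≤ p.1 then coefw p.1 p.2 ((pa * (1 - pb)⁻¹) ^ N) else 0) = 0 := by
    intro p hp
    rw [Finset.mem_product, Finset.mem_singleton, Finset.mem_range] at hp
    push_neg at hp
    by_cases h1 : p.1 = N
    · have h2 : ¬ p.2 ≤ p.1 := by have := hp h1; omega
      rw [if_neg h2]
    · rw [coefw_G N p.1 p.2 hN, if_neg h1, ite_self]
  rw [tsum_eq_sum hf, Finset.sum_product, Finset.sum_singleton]
  have hterm : ∀ j ∈ range (N + 1),
      (if j ≤ N then coefw N j ((pa * (1 - pb)⁻¹) ^ N) else 0) =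
        ((4 : ℝ) ^ N)⁻¹ * (((N - 1 + j).choose j * 2 ^ (N - j) : ℕ) : ℝ) := by
    intro j hj
    rw [Finset.mem_range] at hj
    rw [if_pos (by omega), coefw_G N N j hN, if_pos rfl]
    have h4 : (4 : ℝ) ^ N = 2 ^ (N + j) * 2 ^ (N - j) := by
      rw [show (4 : ℝ) = 2 ^ 2 by norm_num, ← pow_mul, ← pow_add,
        show N + j + (N - j) = 2 * N by omega]
    push_cast
    rw [h4, mul_inv]
    have hne : ((2 : ℝ) ^ (N - j)) ≠ 0 := by positivity
    field_simp
  rw [Finset.sum_congr rfl hterm, ← Finset.mul_sum, ← Nat.cast_sum, keymain N hN]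
  have h4 : (4 : ℝ) ^ N = 2 * 2 ^ (2 * N - 1) := by
    obtain ⟨k, hk⟩ : ∃ k, 2 * N = k + 1 := ⟨2 * N - 1, by omega⟩
    rw [show (4 : ℝ) = 2 ^ 2 by norm_num, ← pow_mul, hk, show k + 1 - 1 = k by omega, pow_succ]
    ring
  push_cast
  rw [h4]
  have hne : ((2 : ℝ) ^ (2 * N - 1)) ≠ 0 := by positivity
  field_simp
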